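/- arXiv:0910.5187 — 4 statements merged into one kernel-verified Lean document; each statement's English description precedes it below -/
import Mathlib

section
/- Suppose y : ℝ → ℝ is continuous, 2π-periodic, and strictly positive, and β > 0 satisfies both ∫₀^{2π} (1/y(x)^2 - 1/y(x)^3) dx = 0 and ∫₀^{2π} (1/y(x)^2 - 1/y(x)^3) cos(x) dx = πβ. Then β ≤ 8/27. -/
open Real intervalIntegral

theorem beta_le_eight_div_27 (y : ℝ → ℝ) (β : ℝ)
    (hy_cont : Continuous y)
    (hy_per : ∀ x, y (x + 2 * π) = y x)
    (hy_pos : ∀ x, 0 < y x)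
    (hβ : 0 < β)
    (h1 : ∫ x in (0 : ℝ)..(2 * π), (1 / (y x) ^ 2 - 1 / (y x) ^ 3) = 0)
    (h2 : ∫ x in (0 : ℝ)..(2 * π), (1 / (y x) ^ 2 - 1 / (y x) ^ 3) * Real.cos x = π * β) :
    β ≤ 8 / 27 := by
  set g : ℝ → ℝ := fun x => 1 / (y x) ^ 2 - 1 / (y x) ^ 3 with hg_def
  have hg_cont : Continuous g := by
    apply Continuous.sub
    · exact continuous_const.div (hy_cont.pow 2) (fun x => pow_ne_zero _ (hy_pos x).ne')
    · exact continuous_const.div (hy_cont.pow 3) (fun x => pow_ne_zero _ (hy_pos x).ne')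
  have hg_le : ∀ x, g x ≤ 4 / 27 := by
    intro x
    have hy := hy_pos x
    have ht : 0 < 1 / y x := by positivity
    set t := 1 / y x with htdef
    have h2 : g x = t ^ 2 - t ^ 3 := by
      simp only [hg_def, htdef]
      field_simp
    rw [h2]
    nlinarith [sq_nonneg (t - 2/3), mul_nonneg (sq_nonneg (t - 2/3)) (le_of_lt ht)]
  have hπ : (0:ℝ) < π := Real.pi_pos
  have h02 : (0:ℝ) ≤ 2 * π := by linarith
  have hint1 : IntervalIntegrable g MeasureTheory.volume 0 (2*π) :=
    hg_cont.intervalIntegrable _ _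
  have hint2 : IntervalIntegrable (fun x => g x * Real.cos x) MeasureTheory.volume 0 (2*π) :=
    (hg_cont.mul Real.continuous_cos).intervalIntegrable _ _
  have hint3 : IntervalIntegrable (fun x => g x * (1 + Real.cos x)) MeasureTheory.volume 0 (2*π) :=
    (hg_cont.mul (continuous_const.add Real.continuous_cos)).intervalIntegrable _ _
  have hint4 : IntervalIntegrable (fun x => 4/27 * (1 + Real.cos x)) MeasureTheory.volume 0 (2*π) :=
    (continuous_const.mul (continuous_const.add Real.continuous_cos)).intervalIntegrable _ _
  have key : (∫ x in (0:ℝ)..(2*π), g x * (1 + Real.cos x)) = π * β := by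
    have : (∫ x in (0:ℝ)..(2*π), g x * (1 + Real.cos x))
        = (∫ x in (0:ℝ)..(2*π), g x) + ∫ x in (0:ℝ)..(2*π), g x * Real.cos x := by
      rw [← intervalIntegral.integral_add hint1 hint2]
      congr 1; ext x; ring
    rw [this, h1, h2]; ring
  have hmono : (∫ x in (0:ℝ)..(2*π), g x * (1 + Real.cos x))
      ≤ ∫ x in (0:ℝ)..(2*π), 4/27 * (1 + Real.cos x) := by
    apply intervalIntegral.integral_mono_on h02 hint3 hint4
    intro x _
    have hc : 0 ≤ 1 + Real.cos x := by nlinarith [Real.neg_one_le_cos x]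
    exact mul_le_mul_of_nonneg_right (hg_le x) hc
  have hval : (∫ x in (0:ℝ)..(2*π), 4/27 * (1 + Real.cos x)) = 8 * π / 27 := by
    rw [intervalIntegral.integral_const_mul]
    rw [intervalIntegral.integral_add (intervalIntegrable_const)
      (Real.continuous_cos.intervalIntegrable _ _)]
    simp [Real.sin_two_pi]
    ring
  rw [key, hval] at hmono
  nlinarith
end

section
/- There is no strictly positive 2π-periodic C³ solution h of h - (μ/3) h³ cos(x) + (χ/3) h³ (h' + h''') = q when q > (2/3)√(2/μ), where μ > 0 and χ ≥ 0. -/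
open Real

private lemma periodic_deriv' (f : ℝ → ℝ) (c : ℝ) (hf : ∀ x, f (x + c) = f x) (x : ℝ) :
    deriv f (x + c) = deriv f x := by
  have : (fun y => f (y + c)) = f := funext hf
  rw [← deriv_comp_add_const f c x, this]

private lemma cubic_bound (t q : ℝ) (ht : 0 < t) (hq : 0 < q) :
    1/t^2 - q/t^3 ≤ 4/(27*q^2) := by
  rw [div_sub_div _ _ (by positivity) (by positivity),
    div_le_div_iff₀ (by positivity) (by positivity)]
  nlinarith [mul_nonneg (sq_nonneg (2*t-3*q)) (by positivity : (0:ℝ) ≤ t + 3*q),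
    sq_nonneg t, sq_nonneg q]

theorem no_positive_steady_state (μ χ q : ℝ) (hμ : 0 < μ) (hχ : 0 ≤ χ)
    (hq : q > (2 / 3) * Real.sqrt (2 / μ)) :
    ¬ ∃ h : ℝ → ℝ, ContDiff ℝ 3 h ∧ (∀ x, h (x + 2 * π) = h x) ∧ (∀ x, 0 < h x) ∧
      (∀ x, h x - (μ / 3) * (h x) ^ 3 * Real.cos x
          + (χ / 3) * (h x) ^ 3 * (deriv h x + deriv (deriv (deriv h)) x) = q) := by
  rintro ⟨h, hC, hper, hpos, heq⟩
  have hqpos : 0 < q :=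
    lt_of_le_of_lt (by positivity : (0:ℝ) ≤ (2/3) * Real.sqrt (2/μ)) hq
  -- smoothness bookkeeping
  have hC2 : ContDiff ℝ 2 (deriv h) := by
    have := (contDiff_succ_iff_deriv.mp (show ContDiff ℝ ((2:ℕ) + 1) h by exact_mod_cast hC)).2.2
    exact_mod_cast this
  have hC1 : ContDiff ℝ 1 (deriv (deriv h)) := by
    have := (contDiff_succ_iff_deriv.mp
      (show ContDiff ℝ ((1:ℕ) + 1) (deriv h) by exact_mod_cast hC2)).2.2
    exact_mod_cast this
  have hd0 : Differentiable ℝ h := hC.differentiable (by norm_num)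
  have hd1 : Differentiable ℝ (deriv h) := hC2.differentiable (by norm_num)
  have hd2 : Differentiable ℝ (deriv (deriv h)) := hC1.differentiable (by norm_num)
  have hc0 : Continuous h := hC.continuous
  have hc1 : Continuous (deriv h) := hC2.continuous
  have hc2 : Continuous (deriv (deriv h)) := hC1.continuous
  have hc3 : Continuous (deriv (deriv (deriv h))) := by
    have := (contDiff_succ_iff_deriv.mp
      (show ContDiff ℝ ((0:ℕ) + 1) (deriv (deriv h)) by exact_mod_cast hC1)).2.2
    exact this.continuous
  set G : ℝ → ℝ := fun x => deriv h x + deriv (deriv (deriv h)) x with hG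
  have hcG : Continuous G := hc1.add hc3
  -- the weight
  set w : ℝ → ℝ := fun x => 1 + Real.cos x with hw
  have hw0 : ∀ x, 0 ≤ w x := fun x => by
    have := Real.neg_one_le_cos x; simp only [hw]; linarith
  have hcw : Continuous w := continuous_const.add Real.continuous_cos
  -- Step 1 : ∫ w * G = 0 via explicit antiderivative and periodicity
  have key1 : ∫ x in (0:ℝ)..(2*π), w x * G x = 0 := by
    set Φ : ℝ → ℝ := fun x =>
      (1 + Real.cos x) * (h x + deriv (deriv h) x) + Real.sin x * deriv h x
        - Real.cos x * h x with hΦ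
    have hderiv : ∀ x ∈ Set.uIcc (0:ℝ) (2*π), HasDerivAt Φ (w x * G x) x := by
      intro x _
      have H1 : HasDerivAt (fun y => (1 + Real.cos y) * (h y + deriv (deriv h) y))
          ((-Real.sin x) * (h x + deriv (deriv h) x)
            + (1 + Real.cos x) * (deriv h x + deriv (deriv (deriv h)) x)) x :=
        (((Real.hasDerivAt_cos x).const_add 1).mul
          ((hd0 x).hasDerivAt.add (hd2 x).hasDerivAt))
      have H2 : HasDerivAt (fun y => Real.sin y * deriv h y)
          (Real.cos x * deriv h x + Real.sin x * deriv (deriv h) x) x :=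
        (Real.hasDerivAt_sin x).mul (hd1 x).hasDerivAt
      have H3 : HasDerivAt (fun y => Real.cos y * h y)
          ((-Real.sin x) * h x + Real.cos x * deriv h x) x :=
        (Real.hasDerivAt_cos x).mul (hd0 x).hasDerivAt
      have := (H1.add H2).sub H3
      exact this.congr_deriv
        (by show _ = (1 + Real.cos x) * (deriv h x + deriv (deriv (deriv h)) x); ring)
    have hint : IntervalIntegrable (fun x => w x * G x) MeasureTheory.volume 0 (2*π) :=
      (hcw.mul hcG).intervalIntegrable 0 (2*π)
    rw [intervalIntegral.integral_eq_sub_of_hasDerivAt hderiv hint]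
    have p0 : h (0 + 2*π) = h 0 := hper 0
    have p1 : deriv h (0 + 2*π) = deriv h 0 := periodic_deriv' h (2*π) hper 0
    have p2 : deriv (deriv h) (0 + 2*π) = deriv (deriv h) 0 :=
      periodic_deriv' (deriv h) (2*π) (fun x => periodic_deriv' h (2*π) hper x) 0
    simp only [zero_add] at p0 p1 p2
    simp [hΦ, Real.cos_two_pi, Real.sin_two_pi, p0, p1, p2]
  -- Step 2 : ∫ w * cos = π
  have key2 : ∫ x in (0:ℝ)..(2*π), w x * Real.cos x = π := by
    have : ∀ x ∈ Set.uIcc (0:ℝ) (2*π), w x * Real.cos x = Real.cos x + Real.cos x ^ 2 :=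
      fun x _ => by simp only [hw]; ring
    rw [intervalIntegral.integral_congr this, intervalIntegral.integral_add
      (Real.continuous_cos.intervalIntegrable 0 (2*π))
      ((Real.continuous_cos.pow 2).intervalIntegrable 0 (2*π)) (g := fun x => Real.cos x ^ 2),
      integral_cos, integral_cos_sq]
    simp [Real.sin_two_pi, Real.cos_two_pi]
  -- Step 3 : ∫ w = 2π
  have key3 : ∫ x in (0:ℝ)..(2*π), w x = 2*π := by
    simp only [hw]
    rw [intervalIntegral.integral_add (intervalIntegrable_const)
      (Real.continuous_cos.intervalIntegrable 0 (2*π)), integral_cos]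
    simp [Real.sin_two_pi]
  -- Step 4 : pointwise identity from the equation
  have hne : ∀ x, h x ≠ 0 := fun x => (hpos x).ne'
  have pointwise : ∀ x, w x * (1/(h x)^2 - q/(h x)^3)
      = (μ/3) * (w x * Real.cos x) - (χ/3) * (w x * G x) := by
    intro x
    have E := heq x
    have hx := hne x
    have Ediv : 1/(h x)^2 - q/(h x)^3 = (μ/3) * Real.cos x - (χ/3) * G x := by
      simp only [hG]
      rw [← E]
      field_simp
      ring
    rw [Ediv]; ring
  -- Step 5: integrate
  have hcf : Continuous (fun x => w x * (1/(h x)^2 - q/(h x)^3)) := by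
    apply hcw.mul
    exact (continuous_const.div (hc0.pow 2) (fun x => pow_ne_zero 2 (hne x))).sub
      (continuous_const.div (hc0.pow 3) (fun x => pow_ne_zero 3 (hne x)))
  have int_eq : ∫ x in (0:ℝ)..(2*π), w x * (1/(h x)^2 - q/(h x)^3) = μ * π / 3 := by
    rw [intervalIntegral.integral_congr
      (fun x _ => pointwise x)]
    rw [intervalIntegral.integral_sub
      ((continuous_const.mul (hcw.mul Real.continuous_cos)).intervalIntegrable 0 (2*π))
      ((continuous_const.mul (hcw.mul hcG)).intervalIntegrable 0 (2*π))
      (f := fun x => μ/3 * (w x * Real.cos x)) (g := fun x => χ/3 * (w x * G x)),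
      intervalIntegral.integral_const_mul, intervalIntegral.integral_const_mul,
      key1, key2]
    ring
  have int_le : ∫ x in (0:ℝ)..(2*π), w x * (1/(h x)^2 - q/(h x)^3)
      ≤ ∫ x in (0:ℝ)..(2*π), w x * (4/(27*q^2)) := by
    apply intervalIntegral.integral_mono_on (by positivity)
      (hcf.intervalIntegrable 0 (2*π))
      ((hcw.mul continuous_const).intervalIntegrable 0 (2*π))
    intro x _
    exact mul_le_mul_of_nonneg_left (cubic_bound (h x) q (hpos x) hqpos) (hw0 x)
  have int_rhs : ∫ x in (0:ℝ)..(2*π), w x * (4/(27*q^2)) = (2*π) * (4/(27*q^2)) := by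
    rw [intervalIntegral.integral_mul_const, key3]
  -- Step 6: conclude
  rw [int_eq, int_rhs] at int_le
  have hq2 : ((2/3) * Real.sqrt (2/μ))^2 < q^2 :=
    pow_lt_pow_left₀ hq (by positivity) (by norm_num)
  rw [mul_pow, Real.sq_sqrt (by positivity : (0:ℝ) ≤ 2/μ)] at hq2
  have hπ := Real.pi_pos
  have h8 : 8/(9*μ) < q^2 := by
    have : ((2:ℝ)/3)^2 * (2/μ) = 8/(9*μ) := by ring
    linarith [hq2, this ▸ hq2]
  rw [div_lt_iff₀ (by positivity)] at h8
  have h27 : (0:ℝ) < 27*q^2 := by positivity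
  rw [show 2*π*(4/(27*q^2)) = 8*π/(27*q^2) by ring, le_div_iff₀ h27] at int_le
  have key : 9*(μ*q^2) ≤ 8 := by
    have hmul : 9*(μ*q^2)*π ≤ 8*π := by nlinarith [int_le]
    exact le_of_mul_le_mul_right hmul hπ
  nlinarith [key, h8]
end

section
/- Let F_ε(z) = -z²/4 + (ε/6)z - (ε²/6) ln(z + ε). If 0 < ε < (√33 - 3)/4, then |F_ε(z)| ≤ z²/2 + 3/5 for all z ≥ 0. -/
open Real

theorem F_eps_bound (ε : ℝ) (hε : 0 < ε) (hε' : ε < (Real.sqrt 33 - 3) / 4)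
    (z : ℝ) (hz : 0 ≤ z) :
    |(-(z ^ 2) / 4 + ε / 6 * z - ε ^ 2 / 6 * Real.log (z + ε))| ≤ z ^ 2 / 2 + 3 / 5 := by
  have hsqrt : Real.sqrt 33 < 5.75 := by
    rw [show (5.75 : ℝ) = Real.sqrt (5.75 ^ 2) by rw [Real.sqrt_sq]; norm_num]
    exact Real.sqrt_lt_sqrt (by norm_num) (by norm_num)
  have hε16 : ε < 11 / 16 := by linarith
  have hzε : 0 < z + ε := by linarith
  have hA : Real.log (z + ε) ≤ z + ε - 1 := Real.log_le_sub_one_of_pos hzε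
  have hB : Real.log ε ≤ Real.log (z + ε) :=
    Real.log_le_log hε (by linarith)
  have hC : Real.log ε⁻¹ ≤ ε⁻¹ - 1 := Real.log_le_sub_one_of_pos (by positivity)
  rw [Real.log_inv] at hC
  have hC' : -(ε ^ 2 * Real.log ε) ≤ ε - ε ^ 2 := by
    have h := mul_le_mul_of_nonneg_left hC (sq_nonneg ε)
    have : ε ^ 2 * ε⁻¹ = ε := by field_simp
    nlinarith [h]
  rw [abs_le]
  constructor
  · -- lower bound: -(z²/2+3/5) ≤ F
    have hA' : ε ^ 2 * Real.log (z + ε) ≤ ε ^ 2 * (z + ε - 1) :=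
      mul_le_mul_of_nonneg_left hA (sq_nonneg ε)
    nlinarith [sq_nonneg (z / 2 - ε ^ 2 / 6), mul_nonneg hε.le hz, sq_nonneg ε, hε16]
  · -- upper bound: F ≤ z²/2+3/5
    have hB' : ε ^ 2 * Real.log ε ≤ ε ^ 2 * Real.log (z + ε) :=
      mul_le_mul_of_nonneg_left hB (sq_nonneg ε)
    nlinarith [sq_nonneg (z / 2 - ε / 6), sq_nonneg z, hε16, hC']
end

section
/- Linear Grönwall with maximum: suppose v : [0, T] → [0, ∞) is continuous, A ≥ 0, B : [0, T] → [0, ∞) is integrable, and v(T') ≤ v(0) + ∫₀^{T'} B(t) max{A, v(t)} dt for all T' ∈ [0, T]. Then v(T) ≤ max{A, v(0)} exp(∫₀^T B(t) dt). -/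
open Real MeasureTheory intervalIntegral Filter

/-- One-step Grönwall bound: if `∫_a^b B ≤ δ < 1`, then the integral inequality
gives `w ≤ K / (1 - δ)` on `[a, b]`, and also the "updated constant" bound. -/
lemma gronwall_step (a b K δ : ℝ) (hab : a ≤ b) (hK : 0 ≤ K)
    (w B : ℝ → ℝ)
    (hw : ContinuousOn w (Set.Icc a b))
    (hwpos : ∀ t ∈ Set.Icc a b, 0 ≤ w t)
    (hB0 : ∀ t ∈ Set.Icc a b, 0 ≤ B t)
    (hBint : IntervalIntegrable B volume a b)
    (hβ : (∫ s in a..b, B s) ≤ δ) (hδ0 : 0 ≤ δ) (hδ1 : δ < 1)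
    (hineq : ∀ t ∈ Set.Icc a b, w t ≤ K + ∫ s in a..t, B s * w s) :
    (∀ t ∈ Set.Icc a b, w t ≤ K / (1 - δ)) ∧
      K + (∫ s in a..b, B s * w s) ≤ K / (1 - δ) := by
  have h1δ : (0:ℝ) < 1 - δ := by linarith
  obtain ⟨t0, ht0, hmax⟩ := isCompact_Icc.exists_isMaxOn (Set.nonempty_Icc.2 hab) hw
  set M := w t0 with hM
  have hM0 : 0 ≤ M := hwpos t0 ht0
  -- integrability of B * w on subintervals
  have hBwint : ∀ t ∈ Set.Icc a b,
      IntervalIntegrable (fun s => B s * w s) volume a t := by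
    intro t ht
    have h1 : IntervalIntegrable B volume a t := by
      apply hBint.mono_set
      rw [Set.uIcc_of_le ht.1, Set.uIcc_of_le hab]
      exact Set.Icc_subset_Icc_right ht.2
    exact h1.mul_continuousOn (by
      rw [Set.uIcc_of_le ht.1]
      exact hw.mono (Set.Icc_subset_Icc_right ht.2))
  -- key estimate: ∫_a^t B w ≤ M * δ
  have hkey : ∀ t ∈ Set.Icc a b, (∫ s in a..t, B s * w s) ≤ M * δ := by
    intro t ht
    have h1 : (∫ s in a..t, B s * w s) ≤ ∫ s in a..t, B s * M := by
      apply intervalIntegral.integral_mono_on ht.1 (hBwint t ht)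
      · exact ((hBint.mono_set (by
          rw [Set.uIcc_of_le ht.1, Set.uIcc_of_le hab]
          exact Set.Icc_subset_Icc_right ht.2)).mul_const M)
      · intro s hs
        have hs' : s ∈ Set.Icc a b := ⟨hs.1, hs.2.trans ht.2⟩
        exact mul_le_mul_of_nonneg_left (hmax hs') (hB0 s hs')
    have h2 : (∫ s in a..t, B s * M) = (∫ s in a..t, B s) * M := by
      rw [intervalIntegral.integral_mul_const]
    have hBat : IntervalIntegrable B volume a t := by
      apply hBint.mono_set
      rw [Set.uIcc_of_le ht.1, Set.uIcc_of_le hab]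
      exact Set.Icc_subset_Icc_right ht.2
    have hBtb : IntervalIntegrable B volume t b := by
      apply hBint.mono_set
      rw [Set.uIcc_of_le ht.2, Set.uIcc_of_le hab]
      exact Set.Icc_subset_Icc_left ht.1
    have h3 : (∫ s in a..t, B s) ≤ δ := by
      have hadd : (∫ s in a..t, B s) + (∫ s in t..b, B s) = ∫ s in a..b, B s :=
        intervalIntegral.integral_add_adjacent_intervals hBat hBtb
      have hpos : 0 ≤ ∫ s in t..b, B s := by
        apply intervalIntegral.integral_nonneg ht.2
        intro s hs
        exact hB0 s ⟨ht.1.trans hs.1, hs.2⟩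
      linarith
    calc (∫ s in a..t, B s * w s) ≤ (∫ s in a..t, B s) * M := h1.trans h2.le
      _ ≤ δ * M := mul_le_mul_of_nonneg_right h3 hM0
      _ = M * δ := mul_comm _ _
  have hMbound : M ≤ K / (1 - δ) := by
    have := (hineq t0 ht0).trans (add_le_add_right (hkey t0 ht0) K)
    rw [le_div_iff₀ h1δ]
    nlinarith
  constructor
  · intro t ht
    exact (hmax ht).trans hMbound
  · have h1 : K + (∫ s in a..b, B s * w s) ≤ K + M * δ :=
      add_le_add_right (hkey b ⟨hab, le_refl b⟩) K
    have h2 : K + M * δ ≤ K / (1 - δ) := by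
      rw [le_div_iff₀ h1δ] at hMbound ⊢
      nlinarith
    linarith

/-- Iterated Grönwall: if `∫_a^T B = n • δ` with `0 ≤ δ < 1`, then `w T ≤ K/(1-δ)^n`. -/
lemma gronwall_iter (T : ℝ) (hT : 0 ≤ T) (w B : ℝ → ℝ)
    (hw : ContinuousOn w (Set.Icc 0 T))
    (hwpos : ∀ t ∈ Set.Icc 0 T, 0 ≤ w t)
    (hB0 : ∀ t ∈ Set.Icc 0 T, 0 ≤ B t)
    (hBint : IntervalIntegrable B volume 0 T)
    (δ : ℝ) (hδ0 : 0 ≤ δ) (hδ1 : δ < 1) :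
    ∀ n : ℕ, ∀ a K : ℝ, 0 ≤ a → a ≤ T → 0 ≤ K →
      ((∫ s in a..T, B s) = n * δ) →
      (∀ t ∈ Set.Icc a T, w t ≤ K + ∫ s in a..t, B s * w s) →
      w T ≤ K / (1 - δ) ^ n := by
  have h1δ : (0:ℝ) < 1 - δ := by linarith
  intro n
  induction n with
  | zero =>
    intro a K ha0 haT hK hint hineq
    have hsub : Set.Icc a T ⊆ Set.Icc 0 T := Set.Icc_subset_Icc_left ha0
    have := gronwall_step a T K 0 haT hK w B (hw.mono hsub)
      (fun t ht => hwpos t (hsub ht)) (fun t ht => hB0 t (hsub ht))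
      (hBint.mono_set (by rw [Set.uIcc_of_le haT, Set.uIcc_of_le hT]; exact hsub) )
      (by simp at hint; simp [hint]) le_rfl one_pos hineq
    · simpa using this.1 T ⟨haT, le_refl T⟩
  | succ n ih =>
    intro a K ha0 haT hK hint hineq
    have hsub : Set.Icc a T ⊆ Set.Icc 0 T := Set.Icc_subset_Icc_left ha0
    have hBaT : IntervalIntegrable B volume a T :=
      hBint.mono_set (by rw [Set.uIcc_of_le haT, Set.uIcc_of_le hT]; exact hsub)
    -- find b with ∫_a^b B = δ, via IVT
    have hgcont : ContinuousOn (fun t => ∫ s in a..t, B s) (Set.Icc a T) := by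
      have := continuousOn_primitive_interval (f := B) (μ := volume) (a := a) (b := T)
        (by rw [Set.uIcc_of_le haT];
            exact (intervalIntegrable_iff_integrableOn_Icc_of_le haT).1 hBaT)
      rwa [Set.uIcc_of_le haT] at this
    have hivt := intermediate_value_Icc haT hgcont
    have hδmem : δ ∈ Set.Icc ((fun t => ∫ s in a..t, B s) a)
        ((fun t => ∫ s in a..t, B s) T) := by
      simp only [intervalIntegral.integral_same]
      refine ⟨hδ0, ?_⟩
      rw [hint]
      push_cast
      nlinarith
    obtain ⟨b, hb, hgb⟩ := hivt hδmem
    simp only at hgb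
    have hsubab : Set.Icc a b ⊆ Set.Icc 0 T :=
      fun t ht => ⟨ha0.trans ht.1, ht.2.trans hb.2⟩
    have hBab : IntervalIntegrable B volume a b :=
      hBint.mono_set (by
        rw [Set.uIcc_of_le hb.1, Set.uIcc_of_le hT]; exact hsubab)
    have hstep := gronwall_step a b K δ hb.1 hK w B (hw.mono hsubab)
      (fun t ht => hwpos t (hsubab ht)) (fun t ht => hB0 t (hsubab ht))
      hBab hgb.le hδ0 hδ1
      (fun t ht => hineq t ⟨ht.1, ht.2.trans hb.2⟩)
    -- integral splits
    have hBbT : IntervalIntegrable B volume b T :=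
      hBint.mono_set (by
        rw [Set.uIcc_of_le hb.2, Set.uIcc_of_le hT]
        exact fun t ht => ⟨(ha0.trans hb.1).trans ht.1, ht.2⟩)
    have hBwab : IntervalIntegrable (fun s => B s * w s) volume a b :=
      hBab.mul_continuousOn (by rw [Set.uIcc_of_le hb.1]; exact hw.mono hsubab)
    have hsplit : (∫ s in b..T, B s) = n * δ := by
      have hadd : (∫ s in a..b, B s) + (∫ s in b..T, B s) = ∫ s in a..T, B s :=
        intervalIntegral.integral_add_adjacent_intervals hBab hBbT
      rw [hint, hgb] at hadd
      push_cast at hadd ⊢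
      linarith
    have hineq' : ∀ t ∈ Set.Icc b T, w t ≤ K / (1 - δ) + ∫ s in b..t, B s * w s := by
      intro t ht
      have hBwbt : IntervalIntegrable (fun s => B s * w s) volume b t :=
        (hBint.mono_set (by
          rw [Set.uIcc_of_le ht.1, Set.uIcc_of_le hT]
          exact fun s hs => ⟨(ha0.trans hb.1).trans hs.1, hs.2.trans ht.2⟩)).mul_continuousOn
          (by rw [Set.uIcc_of_le ht.1]
              exact hw.mono fun s hs => ⟨(ha0.trans hb.1).trans hs.1, hs.2.trans ht.2⟩)
      have hadd : (∫ s in a..b, B s * w s) + (∫ s in b..t, B s * w s)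
          = ∫ s in a..t, B s * w s :=
        intervalIntegral.integral_add_adjacent_intervals hBwab hBwbt
      have h1 := hineq t ⟨hb.1.trans ht.1, ht.2⟩
      have h2 := hstep.2
      linarith
    have := ih b (K / (1 - δ)) (ha0.trans hb.1) hb.2 (by positivity) hsplit hineq'
    calc w T ≤ K / (1 - δ) / (1 - δ) ^ n := this
      _ = K / (1 - δ) ^ (n + 1) := by
          rw [div_div, ← pow_succ']

theorem linear_gronwall_max (T A : ℝ) (hT : 0 ≤ T) (hA : 0 ≤ A)
    (v B : ℝ → ℝ)
    (hcont : ContinuousOn v (Set.Icc 0 T))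
    (hvnonneg : ∀ t ∈ Set.Icc 0 T, 0 ≤ v t)
    (hBnonneg : ∀ t ∈ Set.Icc 0 T, 0 ≤ B t)
    (hBint : IntervalIntegrable B volume 0 T)
    (hineq : ∀ T' ∈ Set.Icc 0 T,
      v T' ≤ v 0 + ∫ t in (0 : ℝ)..T', B t * max A (v t)) :
    v T ≤ max A (v 0) * Real.exp (∫ t in (0 : ℝ)..T, B t) := by
  set w : ℝ → ℝ := fun t => max A (v t) with hwdef
  set C : ℝ := max A (v 0) with hCdef
  set β : ℝ := ∫ t in (0:ℝ)..T, B t with hβdef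
  have hT0 : (0:ℝ) ∈ Set.Icc 0 T := ⟨le_refl 0, hT⟩
  have hC0 : 0 ≤ C := le_trans hA (le_max_left _ _)
  have hwcont : ContinuousOn w (Set.Icc 0 T) := continuousOn_const.sup hcont
  have hwpos : ∀ t ∈ Set.Icc 0 T, 0 ≤ w t :=
    fun t ht => le_trans hA (le_max_left _ _)
  have hβ0 : 0 ≤ β :=
    intervalIntegral.integral_nonneg hT hBnonneg
  -- w satisfies the Grönwall inequality with constant C
  have hwineq : ∀ t ∈ Set.Icc 0 T, w t ≤ C + ∫ s in (0:ℝ)..t, B s * w s := by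
    intro t ht
    have hI0 : 0 ≤ ∫ s in (0:ℝ)..t, B s * w s := by
      apply intervalIntegral.integral_nonneg ht.1
      intro s hs
      have hs' : s ∈ Set.Icc 0 T := ⟨hs.1, hs.2.trans ht.2⟩
      exact mul_nonneg (hBnonneg s hs') (hwpos s hs')
    have h1 := hineq t ht
    simp only [hwdef] at *
    apply max_le
    · linarith [le_max_left A (v 0)]
    · linarith [le_max_right A (v 0)]
  -- eventually, w T ≤ C / (1 - β/n)^n
  have hev : ∀ᶠ n : ℕ in atTop, w T ≤ C / (1 - β / n) ^ n := by
    have hβn : ∀ᶠ n : ℕ in atTop, β < n :=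
      tendsto_natCast_atTop_atTop.eventually_gt_atTop β
    filter_upwards [hβn] with n hn
    have hn0 : (0:ℝ) < n := lt_of_le_of_lt hβ0 hn
    have hδ0 : 0 ≤ β / n := div_nonneg hβ0 hn0.le
    have hδ1 : β / n < 1 := (div_lt_one hn0).2 hn
    exact gronwall_iter T hT w B hwcont hwpos hBnonneg hBint (β / n) hδ0 hδ1
      n 0 C le_rfl hT hC0 (by field_simp; exact hβdef.symm) hwineq
  -- the limit of the bound is C * exp β
  have hlim : Tendsto (fun n : ℕ => C / (1 - β / n) ^ n) atTop (nhds (C * Real.exp β)) := by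
    have h1 : Tendsto (fun n : ℕ => (1 - β / n) ^ n) atTop (nhds (Real.exp (-β))) := by
      have := Real.tendsto_one_add_div_pow_exp (-β)
      simpa [sub_eq_add_neg, neg_div] using this
    have h2 : Tendsto (fun n : ℕ => C / (1 - β / n) ^ n) atTop
        (nhds (C / Real.exp (-β))) :=
      tendsto_const_nhds.div h1 (Real.exp_ne_zero _)
    have he : C / Real.exp (-β) = C * Real.exp β := by
      rw [Real.exp_neg]; field_simp
    rwa [he] at h2
  have hwT : w T ≤ C * Real.exp β := ge_of_tendsto hlim hev
  exact le_trans (le_max_right A (v T)) hwT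
end
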